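/- Let M = !![a,b;c,d] be a 2×2 matrix over the real quaternions with a, b, c, d all nonzero and α_M := |a|²|d|² + |b|²|c|² − 2·Re(a·conj(c)·d·conj(b)) ≠ 0. Set l₁₁ = da − dbd⁻¹c, l₁₂ = bdb⁻¹a − bc, l₂₁ = cac⁻¹d − cb, l₂₂ = ad − aca⁻¹b and r₁₁ = ad − bd⁻¹cd, r₁₂ = db⁻¹ab − cb, r₂₁ = ac⁻¹dc − bc, r₂₂ = da − ca⁻¹ba (all of these are nonzero). Then M is invertible, with M⁻¹ = !![l₁₁⁻¹·d, −l₁₂⁻¹·b; −l₂₁⁻¹·c, l₂₂⁻¹·a] = !![d·r₁₁⁻¹, −b·r₁₂⁻¹; −c·r₂₁⁻¹, a·r₂₂⁻¹]; that is, M·N = 1 = N·M where N is either of these two (equal) matrices. -/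

import Mathlib

open Matrix Quaternion
open scoped Quaternion

private lemma re_comm' (p q : ℍ[ℝ]) : (p * q).re = (q * p).re := by
  simp only [Quaternion.re_mul]; ring

private lemma normSq_sub'' (x y : ℍ[ℝ]) :
    normSq (x - y) = normSq x + normSq y - 2 * (x * star y).re := by
  have h : (y * star x).re = (x * star y).re := by
    conv_lhs => rw [← Quaternion.re_star (y * star x)]
    rw [StarMul.star_mul, star_star]
  simp only [Quaternion.normSq_def, star_sub, mul_sub, sub_mul, Quaternion.re_sub]
  linarith [h]

private lemma key_norm (a b c d : ℍ[ℝ]) (hd : d ≠ 0) :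
    ‖d * a - d * b * d⁻¹ * c‖ ^ 2
      = ‖a‖^2*‖d‖^2 + ‖b‖^2*‖c‖^2 - 2*(a * star c * d * star b).re := by
  have h1 : normSq d ≠ 0 := normSq_ne_zero.2 hd
  have hds : (star d)⁻¹ = (normSq d)⁻¹ • d := by
    refine inv_eq_of_mul_eq_one_left ?_
    rw [smul_mul_assoc, self_mul_star, smul_coe, inv_mul_cancel₀ h1, coe_one]
  have e2 : normSq (d * b * d⁻¹ * c) = normSq b * normSq c := by
    rw [_root_.map_mul, _root_.map_mul, _root_.map_mul, map_inv₀]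
    field_simp
  have e3 : ((d * a) * star (d * b * d⁻¹ * c)).re = (a * star c * d * star b).re := by
    have h4 : (d * a) * star (d * b * d⁻¹ * c)
        = (d * (a * (star c * ((star d)⁻¹ * (star b))))) * star d := by
      simp only [StarMul.star_mul, star_inv₀, mul_assoc]
    rw [h4, re_comm', ← mul_assoc, star_mul_self, coe_mul_eq_smul, hds]
    simp only [smul_mul_assoc, mul_smul_comm, smul_smul, Quaternion.re_smul, smul_eq_mul]
    rw [mul_inv_cancel₀ h1, one_mul]
    congr 1
    simp only [mul_assoc]
    rfl
  simp only [sq, ← normSq_eq_norm_mul_self]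
  rw [normSq_sub'', _root_.map_mul, e2, e3]
  ring

private lemma fin2_eq {α : Type*} {a b c d e f g h : α}
    (h1 : a = e) (h2 : b = f) (h3 : c = g) (h4 : d = h) :
    !![a, b; c, d] = !![e, f; g, h] := by rw [h1, h2, h3, h4]

/-- explicit two-sided inverse of a `2×2` quaternionic matrix. -/
theorem quaternion_matrix_inverse (a b c d : ℍ[ℝ])
    (ha : a ≠ 0) (hb : b ≠ 0) (hc : c ≠ 0) (hd : d ≠ 0)
    (hα : ‖a‖ ^ 2 * ‖d‖ ^ 2 + ‖b‖ ^ 2 * ‖c‖ ^ 2 - 2 * (a * star c * d * star b).re ≠ 0)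
    (M : Matrix (Fin 2) (Fin 2) ℍ[ℝ]) (hM : M = !![a, b; c, d]) :
    (d * a - d * b * d⁻¹ * c ≠ 0 ∧ b * d * b⁻¹ * a - b * c ≠ 0 ∧
     c * a * c⁻¹ * d - c * b ≠ 0 ∧ a * d - a * c * a⁻¹ * b ≠ 0 ∧
     a * d - b * d⁻¹ * c * d ≠ 0 ∧ d * b⁻¹ * a * b - c * b ≠ 0 ∧
     a * c⁻¹ * d * c - b * c ≠ 0 ∧ d * a - c * a⁻¹ * b * a ≠ 0) ∧
    IsUnit M ∧
    !![(d * a - d * b * d⁻¹ * c)⁻¹ * d, -((b * d * b⁻¹ * a - b * c)⁻¹ * b);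
       -((c * a * c⁻¹ * d - c * b)⁻¹ * c), (a * d - a * c * a⁻¹ * b)⁻¹ * a]
      = !![d * (a * d - b * d⁻¹ * c * d)⁻¹, -(b * (d * b⁻¹ * a * b - c * b)⁻¹);
           -(c * (a * c⁻¹ * d * c - b * c)⁻¹), a * (d * a - c * a⁻¹ * b * a)⁻¹] ∧
    M * !![(d * a - d * b * d⁻¹ * c)⁻¹ * d, -((b * d * b⁻¹ * a - b * c)⁻¹ * b);
           -((c * a * c⁻¹ * d - c * b)⁻¹ * c), (a * d - a * c * a⁻¹ * b)⁻¹ * a] = 1 ∧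
    !![(d * a - d * b * d⁻¹ * c)⁻¹ * d, -((b * d * b⁻¹ * a - b * c)⁻¹ * b);
       -((c * a * c⁻¹ * d - c * b)⁻¹ * c), (a * d - a * c * a⁻¹ * b)⁻¹ * a] * M = 1 := by
  set S : ℍ[ℝ] := a - b * d⁻¹ * c with hSdef
  set U : ℍ[ℝ] := d * b⁻¹ * a - c with hUdef
  set T : ℍ[ℝ] := a * c⁻¹ * d - b with hTdef
  set V : ℍ[ℝ] := d - c * a⁻¹ * b with hVdef
  -- factorizations
  have F1 : d * a - d * b * d⁻¹ * c = d * S := by rw [hSdef]; simp only [mul_sub, mul_assoc]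
  have F2 : b * d * b⁻¹ * a - b * c = b * U := by rw [hUdef]; simp only [mul_sub, mul_assoc]
  have F3 : c * a * c⁻¹ * d - c * b = c * T := by rw [hTdef]; simp only [mul_sub, mul_assoc]
  have F4 : a * d - a * c * a⁻¹ * b = a * V := by rw [hVdef]; simp only [mul_sub, mul_assoc]
  have F5 : a * d - b * d⁻¹ * c * d = S * d := by rw [hSdef]; simp only [sub_mul, mul_assoc]
  have F6 : d * b⁻¹ * a * b - c * b = U * b := by rw [hUdef]; simp only [sub_mul, mul_assoc]
  have F7 : a * c⁻¹ * d * c - b * c = T * c := by rw [hTdef]; simp only [sub_mul, mul_assoc]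
  have F8 : d * a - c * a⁻¹ * b * a = V * a := by rw [hVdef]; simp only [sub_mul, mul_assoc]
  have G1 : U = d * b⁻¹ * S := by
    rw [hUdef, hSdef]
    simp only [mul_sub, mul_assoc, inv_mul_cancel_left₀ hb, mul_inv_cancel_left₀ hd]
  have G2 : T = S * c⁻¹ * d := by
    rw [hTdef, hSdef]
    simp only [sub_mul, mul_assoc, mul_inv_cancel_left₀ hc, inv_mul_cancel₀ hd, mul_one]
  have G3 : V = U * a⁻¹ * b := by
    rw [hVdef, hUdef]
    simp only [sub_mul, mul_assoc, mul_inv_cancel_left₀ ha, inv_mul_cancel₀ hb, mul_one]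
  have G4 : V = c * a⁻¹ * T := by
    rw [hVdef, hTdef]
    simp only [mul_sub, mul_assoc, inv_mul_cancel_left₀ ha, mul_inv_cancel_left₀ hc]
  -- nonvanishing
  have hdS : d * S ≠ 0 := by
    rw [← F1]; intro h
    apply hα; rw [← key_norm a b c d hd, h, norm_zero]; ring
  have hS : S ≠ 0 := fun h => hdS (by rw [h, mul_zero])
  have hU : U ≠ 0 := by rw [G1]; exact mul_ne_zero (mul_ne_zero hd (inv_ne_zero hb)) hS
  have hT : T ≠ 0 := by rw [G2]; exact mul_ne_zero (mul_ne_zero hS (inv_ne_zero hc)) hd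
  have hV : V ≠ 0 := by rw [G3]; exact mul_ne_zero (mul_ne_zero hU (inv_ne_zero ha)) hb
  -- inverse formulas
  have hTi : T⁻¹ = d⁻¹ * (c * S⁻¹) := by
    rw [G2, _root_.mul_inv_rev, _root_.mul_inv_rev, inv_inv]
  have hUi : U⁻¹ = S⁻¹ * (b * d⁻¹) := by
    rw [G1, _root_.mul_inv_rev, _root_.mul_inv_rev, inv_inv]
  have hVi : V⁻¹ = b⁻¹ * (a * U⁻¹) := by
    rw [G3, _root_.mul_inv_rev, _root_.mul_inv_rev, inv_inv]
  have hVi' : V⁻¹ = T⁻¹ * (a * c⁻¹) := by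
    rw [G4, _root_.mul_inv_rev, _root_.mul_inv_rev, inv_inv]
  -- normalized entries
  have n11 : (d * S)⁻¹ * d = S⁻¹ := by
    rw [_root_.mul_inv_rev, mul_assoc, inv_mul_cancel₀ hd, mul_one]
  have n12 : (b * U)⁻¹ * b = U⁻¹ := by
    rw [_root_.mul_inv_rev, mul_assoc, inv_mul_cancel₀ hb, mul_one]
  have n21 : (c * T)⁻¹ * c = T⁻¹ := by
    rw [_root_.mul_inv_rev, mul_assoc, inv_mul_cancel₀ hc, mul_one]
  have n22 : (a * V)⁻¹ * a = V⁻¹ := by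
    rw [_root_.mul_inv_rev, mul_assoc, inv_mul_cancel₀ ha, mul_one]
  have m11 : d * (S * d)⁻¹ = S⁻¹ := by
    rw [_root_.mul_inv_rev, mul_inv_cancel_left₀ hd]
  have m12 : b * (U * b)⁻¹ = U⁻¹ := by
    rw [_root_.mul_inv_rev, mul_inv_cancel_left₀ hb]
  have m21 : c * (T * c)⁻¹ = T⁻¹ := by
    rw [_root_.mul_inv_rev, mul_inv_cancel_left₀ hc]
  have m22 : a * (V * a)⁻¹ = V⁻¹ := by
    rw [_root_.mul_inv_rev, mul_inv_cancel_left₀ ha]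
  -- entry identities
  have E1 : a * S⁻¹ - b * T⁻¹ = 1 := by
    rw [hTi, ← mul_assoc, ← mul_assoc, ← sub_mul, ← hSdef]
    exact mul_inv_cancel₀ hS
  have E2 : b * V⁻¹ - a * U⁻¹ = 0 := by
    rw [hVi, mul_inv_cancel_left₀ hb, sub_self]
  have E3 : c * S⁻¹ - d * T⁻¹ = 0 := by
    rw [hTi, mul_inv_cancel_left₀ hd, sub_self]
  have E4 : d * V⁻¹ - c * U⁻¹ = 1 := by
    rw [hVi, ← mul_assoc, ← mul_assoc, ← sub_mul, ← hUdef]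
    exact mul_inv_cancel₀ hU
  have E5 : S⁻¹ * a - U⁻¹ * c = 1 := by
    rw [hUi, mul_assoc, mul_assoc, ← mul_sub, ← mul_assoc, ← hSdef]
    exact inv_mul_cancel₀ hS
  have E6 : S⁻¹ * b - U⁻¹ * d = 0 := by
    rw [hUi, mul_assoc, mul_assoc, inv_mul_cancel₀ hd, mul_one, sub_self]
  have E7 : V⁻¹ * c - T⁻¹ * a = 0 := by
    rw [hVi', mul_assoc, mul_assoc, inv_mul_cancel₀ hc, mul_one, sub_self]
  have E8 : V⁻¹ * d - T⁻¹ * b = 1 := by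
    rw [hVi', mul_assoc, mul_assoc, ← mul_sub, ← mul_assoc, ← hTdef]
    exact inv_mul_cancel₀ hT
  have hMN : !![a, b; c, d] * !![S⁻¹, -U⁻¹; -T⁻¹, V⁻¹] = 1 := by
    rw [Matrix.mul_fin_two, Matrix.one_fin_two]
    refine fin2_eq ?_ ?_ ?_ ?_
    · rw [mul_neg, ← sub_eq_add_neg]; exact E1
    · rw [mul_neg, neg_add_eq_sub]; exact E2
    · rw [mul_neg, ← sub_eq_add_neg]; exact E3
    · rw [mul_neg, neg_add_eq_sub]; exact E4
  have hNM : !![S⁻¹, -U⁻¹; -T⁻¹, V⁻¹] * !![a, b; c, d] = 1 := by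
    rw [Matrix.mul_fin_two, Matrix.one_fin_two]
    refine fin2_eq ?_ ?_ ?_ ?_
    · rw [neg_mul, ← sub_eq_add_neg]; exact E5
    · rw [neg_mul, ← sub_eq_add_neg]; exact E6
    · rw [neg_mul, neg_add_eq_sub]; exact E7
    · rw [neg_mul, neg_add_eq_sub]; exact E8
  subst hM
  rw [F1, F2, F3, F4, F5, F6, F7, F8, n11, n12, n21, n22, m11, m12, m21, m22]
  refine ⟨⟨mul_ne_zero hd hS, mul_ne_zero hb hU, mul_ne_zero hc hT, mul_ne_zero ha hV,
    mul_ne_zero hS hd, mul_ne_zero hU hb, mul_ne_zero hT hc, mul_ne_zero hV ha⟩, ?_, rfl, ?_, ?_⟩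
  · exact isUnit_iff_exists.mpr ⟨!![S⁻¹, -U⁻¹; -T⁻¹, V⁻¹], hMN, hNM⟩
  · exact hMN
  · exact hNM
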